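/- Let h > 0, σ > 0, ω ∈ ℝ with ω ≠ 0, and let α > 0. Then with ξ = −iα (so that e^{−iξh} = e^{−αh} and e^{iξh} = e^{αh}), the denominator 2 + i(σ/ω)(1 − e^{αh}) is nonzero and |ρ(σ, −iα, ω)| < 1; equivalently, |2 + i(σ/ω)(1 − e^{−αh})| < |2 + i(σ/ω)(1 − e^{αh})|. -/

import Mathlib

/-- The attenuation factor
`ρ(σ, ξ, ω) = (2 + i(σ/ω)(1 − e^{−iξh})) / (2 + i(σ/ω)(1 − e^{iξh}))`. -/
noncomputable def rho (σ : ℝ) (ξ : ℂ) (ω h : ℝ) : ℂ :=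
  (2 + Complex.I * ((σ : ℂ) / (ω : ℂ)) * (1 - Complex.exp (-(Complex.I * ξ * (h : ℂ))))) /
  (2 + Complex.I * ((σ : ℂ) / (ω : ℂ)) * (1 - Complex.exp (Complex.I * ξ * (h : ℂ))))

lemma abs_two_add_I_mul (c : ℝ) :
    ‖2 + Complex.I * (c : ℂ)‖ = Real.sqrt (4 + c ^ 2) := by
  rw [Complex.norm_def]
  congr 1
  simp [Complex.normSq_apply]
  ring

lemma key_ineq (s : ℝ) (hs : s ≠ 0) (x : ℝ) (hx : 0 < x) :
    ‖2 + Complex.I * (s : ℂ) * (1 - Complex.exp (-(x : ℂ)))‖ <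
      ‖2 + Complex.I * (s : ℂ) * (1 - Complex.exp (x : ℂ))‖ := by
  have e1 : Complex.exp (-(x : ℂ)) = ((Real.exp (-x) : ℝ) : ℂ) := by
    rw [Complex.ofReal_exp, ← Complex.ofReal_neg]
  have e2 : Complex.exp (x : ℂ) = ((Real.exp x : ℝ) : ℂ) := by
    rw [Complex.ofReal_exp]
  have r1 : Complex.I * (s : ℂ) * (1 - Complex.exp (-(x : ℂ)))
      = Complex.I * ((s * (1 - Real.exp (-x)) : ℝ) : ℂ) := by
    rw [e1]; push_cast; ring
  have r2 : Complex.I * (s : ℂ) * (1 - Complex.exp (x : ℂ))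
      = Complex.I * ((s * (1 - Real.exp x) : ℝ) : ℂ) := by
    rw [e2]; push_cast; ring
  rw [r1, r2, abs_two_add_I_mul, abs_two_add_I_mul]
  apply Real.sqrt_lt_sqrt
  · positivity
  · have ha : 1 < Real.exp x := by nlinarith [Real.add_one_le_exp x]
    have hb : Real.exp (-x) < 1 := Real.exp_lt_one_iff.mpr (by linarith)
    have hb' : 0 < Real.exp (-x) := Real.exp_pos _
    have hab : Real.exp x * Real.exp (-x) = 1 := by
      rw [← Real.exp_add]; simp
    have hs2 : 0 < s ^ 2 := pow_pos (abs_pos.mpr hs) 2 |>.trans_eq (by rw [sq_abs])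
    have hsum : 0 < Real.exp x + Real.exp (-x) - 2 := by
      nlinarith [sq_nonneg (Real.exp x - 1)]
    have hfact : 0 < (Real.exp x - Real.exp (-x)) * (Real.exp x + Real.exp (-x) - 2) :=
      mul_pos (by linarith) hsum
    nlinarith [mul_pos hs2 hfact]

/-- for purely imaginary wavenumber `ξ = −iα` with `α > 0`, the attenuation
factor satisfies `|ρ(σ, −iα, ω)| < 1`; equivalently
`|2 + i(σ/ω)(1 − e^{−αh})| < |2 + i(σ/ω)(1 − e^{αh})|`. -/
theorem stmt8 (h : ℝ) (hh : 0 < h) (σ : ℝ) (hσ : 0 < σ) (ω : ℝ) (hω : ω ≠ 0)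
    (α : ℝ) (hα : 0 < α) :
    (2 + Complex.I * ((σ : ℂ) / (ω : ℂ)) * (1 - Complex.exp ((α : ℂ) * (h : ℂ))) ≠ 0) ∧
    ‖rho σ (-(Complex.I * (α : ℂ))) ω h‖ < 1 ∧
    ‖2 + Complex.I * ((σ : ℂ) / (ω : ℂ)) * (1 - Complex.exp (-(α : ℂ) * (h : ℂ)))‖ <
      ‖2 + Complex.I * ((σ : ℂ) / (ω : ℂ)) * (1 - Complex.exp ((α : ℂ) * (h : ℂ)))‖ := by
  have hs : (σ / ω : ℝ) ≠ 0 := div_ne_zero (ne_of_gt hσ) hω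
  have hx : 0 < α * h := mul_pos hα hh
  have hdiv : ((σ : ℂ) / (ω : ℂ)) = ((σ / ω : ℝ) : ℂ) := by push_cast; ring
  have harg1 : (-(α : ℂ)) * (h : ℂ) = -(((α * h : ℝ) : ℂ)) := by push_cast; ring
  have harg2 : (α : ℂ) * (h : ℂ) = ((α * h : ℝ) : ℂ) := by push_cast; ring
  have key := key_ineq (σ / ω) hs (α * h) hx
  rw [hdiv, harg1, harg2]
  have hlt :
      ‖2 + Complex.I * (((σ / ω : ℝ)) : ℂ) * (1 - Complex.exp (-(((α * h : ℝ)) : ℂ)))‖ <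
      ‖2 + Complex.I * (((σ / ω : ℝ)) : ℂ) * (1 - Complex.exp (((α * h : ℝ)) : ℂ))‖ := key
  have hden : (2 + Complex.I * (((σ / ω : ℝ)) : ℂ) * (1 - Complex.exp (((α * h : ℝ)) : ℂ))) ≠ 0 := by
    intro h0
    rw [h0] at hlt
    simp at hlt
    exact (norm_nonneg _).not_gt hlt
  refine ⟨hden, ?_, hlt⟩
  · unfold rho
    rw [norm_div]
    have hnum : -(Complex.I * -(Complex.I * (α : ℂ)) * (h : ℂ)) = -(((α * h : ℝ)) : ℂ) := by
      push_cast; rw [show Complex.I * -(Complex.I * (α:ℂ)) = (α:ℂ) by rw [mul_neg, ← mul_assoc, Complex.I_mul_I]; ring]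
    have hden' : Complex.I * -(Complex.I * (α : ℂ)) * (h : ℂ) = (((α * h : ℝ)) : ℂ) := by
      push_cast; rw [show Complex.I * -(Complex.I * (α:ℂ)) = (α:ℂ) by rw [mul_neg, ← mul_assoc, Complex.I_mul_I]; ring]
    rw [hnum, hden', hdiv]
    rw [div_lt_one (lt_of_le_of_lt (norm_nonneg _) hlt)]
    exact hlt
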